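/- Let X_1, …, X_d be linear subspaces of P^n over a field k whose pairwise intersections have dimension at most one, with ideal sheaves I_1, …, I_d; let I be the ideal sheaf of X = X_1 ∪ ⋯ ∪ X_d and J = I_1 ⋯ I_d. For a line L contained in the support of I/J, set J_L' = ∏_{X_i ⊉ L} I_i and I_L = the ideal sheaf of ∪_{X_i ⊇ L} X_i. Then the support of the quotient sheaf (I_L · J_L')/J is contained in L. -/

import Mathlib

/-! Common setup: the projective space `ℙⁿ_k` as the projective spectrum of the
standard graded polynomial ring `k[x₀, …, xₙ]`, graded modules over this ring,
the associated (twisted) sheaves of abelian groups `~M(d)`, sheaf cohomology,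
supports, dimensions, and Castelnuovo–Mumford regularity (both for sheaves, via
cohomology vanishing, and for graded modules, via graded free resolutions). -/

open CategoryTheory AlgebraicGeometry TopologicalSpace Opposite

noncomputable section

attribute [local instance] MvPolynomial.gradedAlgebra

/-- The homogeneous coordinate ring `S = k[x₀, …, xₙ]` of `ℙⁿ_k`. -/
abbrev PolyRing (k : Type) [Field k] (n : ℕ) : Type := MvPolynomial (Fin (n+1)) k

/-- The standard grading on `k[x₀, …, xₙ]`. -/
abbrev polyGrading (k : Type) [Field k] (n : ℕ) : ℕ → Submodule k (PolyRing k n) :=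
  MvPolynomial.homogeneousSubmodule (Fin (n+1)) k

/-- The underlying space of `ℙⁿ_k`: homogeneous relevant primes of `k[x₀, …, xₙ]`. -/
abbrev PSpace (k : Type) [Field k] (n : ℕ) : Type :=
  ProjectiveSpectrum (polyGrading k n)

variable {k : Type} [Field k] {n : ℕ}

/-- The degree-`j` homogeneous part of `S` (trivial in negative degrees),
as an additive subgroup. -/
def homogPiece (k : Type) [Field k] (n : ℕ) (j : ℤ) : AddSubgroup (PolyRing k n) :=
  if 0 ≤ j then (polyGrading k n j.toNat).toAddSubgroup else ⊥

/-- A (ℤ-)graded module over `S = k[x₀, …, xₙ]`: a module together with a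
distinguished family of additive subgroups, its homogeneous components. -/
structure GradedSMod (k : Type) [Field k] (n : ℕ) where
  carrier : Type
  [isAddCommGroup : AddCommGroup carrier]
  [isModule : Module (PolyRing k n) carrier]
  grading : ℤ → AddSubgroup carrier

attribute [instance] GradedSMod.isAddCommGroup GradedSMod.isModule

/-- The family of homogeneous components is an honest grading on the module:
the components decompose the module as a direct sum, and multiplication by a
homogeneous polynomial of degree `i` sends the degree `j` part into the degree
`i + j` part. -/
def GradedSMod.IsGrading (M : GradedSMod k n) : Prop :=
  DirectSum.IsInternal M.grading ∧
    ∀ (i : ℕ) (j : ℤ) (a : PolyRing k n) (x : M.carrier),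
      a ∈ polyGrading k n i → x ∈ M.grading j → a • x ∈ M.grading (i + j)

/-- A graded module is coherent if it is finitely generated (its associated
sheaf on `ℙⁿ` is then a coherent sheaf). -/
def GradedSMod.IsCoherent (M : GradedSMod k n) : Prop :=
  Module.Finite (PolyRing k n) M.carrier

/-- The localization of (the underlying module of) `M` at a point `x` of `ℙⁿ`. -/
abbrev LocAt (M : GradedSMod k n) (x : PSpace k n) : Type :=
  LocalizedModule x.asHomogeneousIdeal.toIdeal.primeCompl M.carrier

/-- The predicate asserting that a family of germs over an open set `U` is
locally a homogeneous fraction `m / b` of total degree `d` (with `m` a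
homogeneous element of `M` and `b` a homogeneous polynomial not vanishing
at the points in question). This is the usual local description of the
sections of the twisted sheaf `~M(d)` on `ℙⁿ`. -/
def IsLocalFraction (M : GradedSMod k n) (d : ℤ) {U : Opens (PSpace k n)}
    (f : ∀ x : U, LocAt M x.1) : Prop :=
  ∀ x : U, ∃ (V : Opens (PSpace k n)) (_ : x.1 ∈ V) (hVU : V ≤ U)
    (l : ℕ) (m : M.carrier) (b : PolyRing k n),
      m ∈ M.grading (d + l) ∧ b ∈ polyGrading k n l ∧
      ∀ y : V, ∃ hb : b ∈ y.1.asHomogeneousIdeal.toIdeal.primeCompl,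
        f ⟨y.1, hVU y.2⟩ = LocalizedModule.mk m ⟨b, hb⟩

/-- The sections of the presheaf underlying `~M(d)` over `U`: the additive
subgroup generated by the families of germs which are locally homogeneous
fractions of total degree `d`. -/
def tildeSections (M : GradedSMod k n) (d : ℤ) (U : Opens (PSpace k n)) :
    AddSubgroup (∀ x : U, LocAt M x.1) :=
  AddSubgroup.closure {f | IsLocalFraction M d f}

/-- Restriction of families of germs along an inclusion of open sets. -/
def resFun (M : GradedSMod k n) {U V : Opens (PSpace k n)} (h : V ≤ U) :
    (∀ x : U, LocAt M x.1) →+ (∀ x : V, LocAt M x.1) where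
  toFun f x := f ⟨x.1, h x.2⟩
  map_zero' := rfl
  map_add' _ _ := rfl

lemma isLocalFraction_res (M : GradedSMod k n) (d : ℤ) {U V : Opens (PSpace k n)}
    (h : V ≤ U) {f : ∀ x : U, LocAt M x.1} (hf : IsLocalFraction M d f) :
    IsLocalFraction M d (resFun M h f) := by
  intro x
  obtain ⟨W, hxW, hWU, l, m, b, hm, hb, hfrac⟩ := hf ⟨x.1, h x.2⟩
  refine ⟨W ⊓ V, ⟨hxW, x.2⟩, inf_le_right, l, m, b, hm, hb, ?_⟩
  intro y
  obtain ⟨hb', heq⟩ := hfrac ⟨y.1, y.2.1⟩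
  exact ⟨hb', heq⟩

lemma res_mem_tildeSections (M : GradedSMod k n) (d : ℤ) {U V : Opens (PSpace k n)}
    (h : V ≤ U) {f : ∀ x : U, LocAt M x.1} (hf : f ∈ tildeSections M d U) :
    resFun M h f ∈ tildeSections M d V := by
  have : tildeSections M d U ≤ (tildeSections M d V).comap (resFun M h) :=
    (AddSubgroup.closure_le _).2
      (fun g hg => AddSubgroup.subset_closure (isLocalFraction_res M d h hg))
  exact this hf

/-- The restriction homomorphism for the presheaf underlying `~M(d)`. -/
def resSectionsHom (M : GradedSMod k n) (d : ℤ) {U V : Opens (PSpace k n)} (h : V ≤ U) :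
    tildeSections M d U →+ tildeSections M d V :=
  AddMonoidHom.mk' (fun f => ⟨resFun M h f.1, res_mem_tildeSections M d h f.2⟩)
    (fun _ _ => Subtype.ext rfl)

/-- The presheaf of abelian groups underlying the twisted sheaf `~M(d)` on `ℙⁿ`. -/
def tildePresheaf (M : GradedSMod k n) (d : ℤ) :
    TopCat.Presheaf AddCommGrpCat.{0} (TopCat.of (PSpace k n)) where
  obj U := AddCommGrpCat.of (tildeSections M d U.unop)
  map {U V} i := AddCommGrpCat.ofHom (resSectionsHom M d i.unop.le)
  map_id U := by
    ext f
    rfl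
  map_comp f g := by
    ext x
    rfl

/-- The twisted sheaf `~M(d)` on `ℙⁿ` associated to a graded module `M`:
the sheafification of the presheaf of locally homogeneous fractions of total
degree `d`. For `d = 0` this is the usual associated sheaf `~M`; for
`M = S` it is the Serre twisting sheaf `O(d)`. -/
def tilde (M : GradedSMod k n) (d : ℤ) :
    TopCat.Sheaf AddCommGrpCat.{0} (TopCat.of (PSpace k n)) :=
  (presheafToSheaf (Opens.grothendieckTopology (TopCat.of (PSpace k n)))
    AddCommGrpCat).obj (tildePresheaf M d)

/-- The derived category instance used to define sheaf cohomology. -/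
def derCatSheaf (X : TopCat.{0}) :
    HasDerivedCategory.{1} (Sheaf (Opens.grothendieckTopology X) AddCommGrpCat.{0}) :=
  HasDerivedCategory.standard _

/-- Sheaf cohomology `Hⁱ(ℙⁿ, F)` of a sheaf of abelian groups on `ℙⁿ`. -/
def sheafCohomology (F : TopCat.Sheaf AddCommGrpCat.{0} (TopCat.of (PSpace k n))) (i : ℕ) :
    Type 1 :=
  letI := derCatSheaf (TopCat.of (PSpace k n))
  letI : HasExt.{1}
      (Sheaf (Opens.grothendieckTopology (TopCat.of (PSpace k n))) AddCommGrpCat.{0}) :=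
    hasExt_of_hasDerivedCategory _
  Sheaf.H F i

/-- A graded module `M` is `r`-regular as a sheaf on `ℙⁿ` (i.e. its associated
coherent sheaf `F = ~M` is `r`-regular in the sense of Castelnuovo–Mumford:
`Hⁱ(ℙⁿ, F(r - i)) = 0` for all `i > 0`). -/
def IsSheafRegular (M : GradedSMod k n) (r : ℤ) : Prop :=
  ∀ i : ℕ, 0 < i → Subsingleton (sheafCohomology (tilde M (r - i)) i)

/-- The support of a sheaf of abelian groups:  points with nontrivial stalk. -/
def sheafSupport (F : TopCat.Sheaf AddCommGrpCat.{0} (TopCat.of (PSpace k n))) :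
    Set (PSpace k n) :=
  {x : PSpace k n | Nontrivial ((F.presheaf.stalk x : AddCommGrpCat.{0}))}

/-- Dimension of a subset of `ℙⁿ` (its topological Krull dimension). -/
def dimOfSet (s : Set (PSpace k n)) : WithBot ℕ∞ :=
  topologicalKrullDim s

/-- The zero locus in `ℙⁿ` of a homogeneous ideal. -/
abbrev pZeroLocus (I : Ideal (PolyRing k n)) : Set (PSpace k n) :=
  ProjectiveSpectrum.zeroLocus (polyGrading k n) (I : Set (PolyRing k n))

end

/-! ### Constructions of graded modules -/

noncomputable section
open CategoryTheory AlgebraicGeometry TopologicalSpace Opposite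

attribute [local instance] MvPolynomial.gradedAlgebra

variable {k : Type} [Field k] {n : ℕ}

/-- A (homogeneous) ideal `I ⊆ S`, viewed as a graded `S`-module; for a
homogeneous ideal, `tilde (ofIdeal I) 0` is the corresponding ideal sheaf on `ℙⁿ`. -/
def ofIdeal (I : Ideal (PolyRing k n)) : GradedSMod k n where
  carrier := I
  grading j := (homogPiece k n j).comap I.subtype.toAddMonoidHom

/-- A submodule of (the underlying module of) a graded module, with the induced
grading. -/
def subGM (M : GradedSMod k n) (p : Submodule (PolyRing k n) M.carrier) : GradedSMod k n where
  carrier := p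
  grading j := (M.grading j).comap p.subtype.toAddMonoidHom

/-- A quotient of a graded module by a submodule, with the induced grading. -/
def quotByGM (M : GradedSMod k n) (p : Submodule (PolyRing k n) M.carrier) : GradedSMod k n where
  carrier := M.carrier ⧸ p
  grading j := (M.grading j).map p.mkQ.toAddMonoidHom

/-- The tensor product `M ⊗_S N` of graded modules, with the induced grading
(the degree `j` part is generated by tensors of homogeneous elements whose
degrees sum to `j`).  Under `tilde`, this corresponds to the tensor product
`~M ⊗_{O_{ℙⁿ}} ~N` of the associated sheaves of `O_{ℙⁿ}`-modules. -/
def tensorGM (M N : GradedSMod k n) : GradedSMod k n where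
  carrier := TensorProduct (PolyRing k n) M.carrier N.carrier
  grading j := AddSubgroup.closure
    {x | ∃ (a b : ℤ) (m : M.carrier) (nn : N.carrier), a + b = j ∧
      m ∈ M.grading a ∧ nn ∈ N.grading b ∧ x = m ⊗ₜ[PolyRing k n] nn}

/-- A degree-preserving `S`-linear map of graded modules. -/
def IsGradedHom (M N : GradedSMod k n) (φ : M.carrier →ₗ[PolyRing k n] N.carrier) : Prop :=
  ∀ (j : ℤ) (x : M.carrier), x ∈ M.grading j → φ x ∈ N.grading j

/-- The image of a graded map, with the induced grading; `tilde (imageGM φ) 0`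
is the image sheaf of the associated map of sheaves. -/
def imageGM {M N : GradedSMod k n} (φ : M.carrier →ₗ[PolyRing k n] N.carrier) :
    GradedSMod k n :=
  subGM N (LinearMap.range φ)

/-- The homology `ker φ / im ψ` at the middle of `M₂ → M₁ → M₀`, with its
induced grading. -/
def homologyGM {M₂ M₁ M₀ : GradedSMod k n}
    (ψ : M₂.carrier →ₗ[PolyRing k n] M₁.carrier)
    (φ : M₁.carrier →ₗ[PolyRing k n] M₀.carrier) : GradedSMod k n :=
  quotByGM (subGM M₁ (LinearMap.ker φ))
    (Submodule.comap (LinearMap.ker φ).subtype (LinearMap.range ψ))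

/-- The quotient `I/J` of an ideal by (its intersection with) a smaller ideal,
as a graded module; for `J ≤ I`, `tilde (quotIdealGM I J) 0` is the quotient
sheaf `~I / ~J`. -/
def quotIdealGM (I J : Ideal (PolyRing k n)) : GradedSMod k n :=
  quotByGM (ofIdeal I) (Submodule.comap I.subtype J)

/-! ### Free graded resolutions and Castelnuovo–Mumford regularity of modules -/

/-- The component entries of a map between (twisted) free graded modules are
homogeneous of the appropriate degrees: the entry relating a generator of
degree `e₁ i` to a generator of degree `e₂ j` is homogeneous of degree
`e₁ i - e₂ j`.  This expresses that the map is a degree-preserving map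
`⊕ S(-e₁ i) → ⊕ S(-e₂ j)`. -/
def IsGradedFreeMap {ι₁ ι₂ : Type} (e₁ : ι₁ → ℤ) (e₂ : ι₂ → ℤ)
    (φ : (ι₁ →₀ PolyRing k n) →ₗ[PolyRing k n] (ι₂ →₀ PolyRing k n)) : Prop :=
  ∀ (i : ι₁) (j : ι₂), φ (Finsupp.single i 1) j ∈ homogPiece k n (e₁ i - e₂ j)

/-- A resolution `⋯ → F₂ → F₁ → F₀ → M → 0` of a graded module `M` by free
graded modules `Fₜ = ⊕_{i : idx t} S(-deg t i)`, with degree-preserving maps. -/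
structure FreeResolution (M : GradedSMod k n) where
  /-- index set of the free generators in homological degree `t` -/
  idx : ℕ → Type
  /-- internal degrees of the free generators -/
  deg : ∀ t, idx t → ℤ
  /-- differentials -/
  d : ∀ t, ((idx (t+1)) →₀ PolyRing k n) →ₗ[PolyRing k n] ((idx t) →₀ PolyRing k n)
  /-- augmentation `F₀ → M` -/
  aug : ((idx 0) →₀ PolyRing k n) →ₗ[PolyRing k n] M.carrier
  graded_d : ∀ t, IsGradedFreeMap (deg (t+1)) (deg t) (d t)
  graded_aug : ∀ i, aug (Finsupp.single i 1) ∈ M.grading (deg 0 i)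
  surj_aug : Function.Surjective aug
  exact_aug : Function.Exact (d 0) aug
  exact_d : ∀ t, Function.Exact (d (t+1)) (d t)

/-- A free graded resolution is minimal if all entries of the differentials lie
in the irrelevant maximal ideal `(x₀, …, xₙ)`, i.e. have vanishing constant
term, and it has finitely many generators in each homological degree. -/
def FreeResolution.IsMinimal {M : GradedSMod k n} (R : FreeResolution M) : Prop :=
  (∀ t, Finite (R.idx t)) ∧
    ∀ (t : ℕ) (i : R.idx (t+1)) (j : R.idx t),
      MvPolynomial.constantCoeff (R.d t (Finsupp.single i 1) j) = 0

/-- The generators of the `t`-th term of the resolution all have degrees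
at most `m + t`. -/
def FreeResolution.DegreeBound {M : GradedSMod k n} (R : FreeResolution M) (m : ℤ) : Prop :=
  ∀ (t : ℕ) (i : R.idx t), R.deg t i ≤ m + t

/-- `M` is `m`-regular in the sense of Castelnuovo–Mumford: it admits a free
graded resolution whose `t`-th term is generated in degrees `≤ m + t`
(equivalently, the minimal free resolution has this property). -/
def IsModuleRegular (M : GradedSMod k n) (m : ℤ) : Prop :=
  ∃ R : FreeResolution M, R.DegreeBound m

/-- The Castelnuovo–Mumford regularity of a graded module: the least `m`
such that `M` is `m`-regular. -/
def moduleReg (M : GradedSMod k n) : ℤ :=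
  sInf {m : ℤ | IsModuleRegular M m}

/-! ### Ideals: saturation, linearity, global sections -/

/-- An ideal of `S` is saturated (with respect to the irrelevant maximal
ideal). Saturated homogeneous ideals correspond bijectively to ideal sheaves
of closed subschemes of `ℙⁿ`. -/
def IsSaturatedIdeal (I : Ideal (PolyRing k n)) : Prop :=
  ∀ f : PolyRing k n, (∀ i : Fin (n+1), MvPolynomial.X i * f ∈ I) → f ∈ I

/-- An ideal defining a linear subspace of `ℙⁿ`: an ideal generated by
homogeneous polynomials of degree 1. -/
def IsLinearIdeal (I : Ideal (PolyRing k n)) : Prop :=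
  ∃ T : Set (PolyRing k n), T ⊆ (polyGrading k n 1 : Set (PolyRing k n)) ∧ I = Ideal.span T

/-- The degree-`d` graded piece of an ideal `I ⊆ S`. -/
def degreePiece (I : Ideal (PolyRing k n)) (d : ℤ) : Type :=
  {f : PolyRing k n // f ∈ I ∧ f ∈ homogPiece k n d}

/-- The natural map from the degree-`d` part of an ideal `I` to the global
sections `H⁰(ℙⁿ, ~I(d))` of the twisted ideal sheaf, sending a homogeneous
element `f` of degree `d` of `I` to the global fraction `f/1`. -/
def toGlobalSections (I : Ideal (PolyRing k n)) (d : ℤ) (f : degreePiece I d) :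
    ((tilde (ofIdeal I) d).val.obj (op ⊤)) :=
  ((sheafificationAdjunction (Opens.grothendieckTopology (TopCat.of (PSpace k n)))
      AddCommGrpCat.{0}).unit.app (tildePresheaf (ofIdeal I) d)).app (op ⊤)
    (⟨fun y => LocalizedModule.mk ⟨f.1, f.2.1⟩ 1, by
      apply AddSubgroup.subset_closure
      intro x
      refine ⟨⊤, trivial, le_rfl, 0, ⟨f.1, f.2.1⟩, 1, ?_, ?_, ?_⟩
      · show f.1 ∈ homogPiece k n (d + (0:ℕ))
        simpa using f.2.2
      · exact (MvPolynomial.mem_homogeneousSubmodule _ _).2 (MvPolynomial.isHomogeneous_one (Fin (n+1)) k)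
      · intro y
        exact ⟨y.1.asHomogeneousIdeal.toIdeal.primeCompl.one_mem, rfl⟩⟩ :
        tildeSections (ofIdeal I) d ⊤)

end


noncomputable section
open CategoryTheory AlgebraicGeometry TopologicalSpace Opposite
attribute [local instance] MvPolynomial.gradedAlgebra

open scoped Classical

namespace SupportLineAux

open MvPolynomial

variable {k : Type} [Field k] {n : ℕ}

section Poly
variable {σ : Type} [DecidableEq σ]

lemma homog_one_le_spanX :
    (homogeneousSubmodule σ k 1 : Submodule k (MvPolynomial σ k)) ≤
      Submodule.span k (Set.range X) := by
  intro p hp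
  rw [mem_homogeneousSubmodule] at hp
  rw [p.as_sum]
  refine Submodule.sum_mem _ fun v hv => ?_
  have hc : coeff v p ≠ 0 := mem_support_iff.mp hv
  have hdeg : v.degree = 1 := by
    rw [Finsupp.degree_eq_weight_one]; exact hp hc
  obtain ⟨i, rfl⟩ : ∃ i, v = Finsupp.single i 1 := by
    have hne : v.support.Nonempty := by
      by_contra h
      rw [Finset.not_nonempty_iff_eq_empty] at h
      rw [Finsupp.degree_apply, h, Finset.sum_empty] at hdeg
      simp at hdeg
    obtain ⟨i, hi⟩ := hne
    refine ⟨i, Finsupp.eq_single_iff.mpr ⟨?_, ?_⟩⟩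
    · intro j hj
      by_contra hji
      simp only [Finset.mem_singleton] at hji
      have h2 : 2 ≤ v.degree := by
        rw [Finsupp.degree_apply, ← Finset.sum_erase_add _ _ hi]
        have h3 : 1 ≤ v j := Nat.one_le_iff_ne_zero.mpr (Finsupp.mem_support_iff.mp hj)
        have hji' : j ∈ v.support.erase i := Finset.mem_erase.mpr ⟨hji, hj⟩
        have h4 : 1 ≤ ∑ x ∈ v.support.erase i, v x :=
          le_trans h3 (Finset.single_le_sum (fun _ _ => Nat.zero_le _) hji')
        have hvi : 1 ≤ v i := Nat.one_le_iff_ne_zero.mpr (Finsupp.mem_support_iff.mp hi)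
        omega
      omega
    · have h1 : v i ≤ v.degree := Finsupp.le_degree i v
      have hvi : 1 ≤ v i := Nat.one_le_iff_ne_zero.mpr (Finsupp.mem_support_iff.mp hi)
      omega
  have hmono : (monomial (Finsupp.single i 1)) (coeff (Finsupp.single i 1) p)
      = (coeff (Finsupp.single i 1) p) • X i := by
    rw [X, smul_monomial, smul_eq_mul, mul_one]
  rw [hmono]
  exact Submodule.smul_mem _ _ (Submodule.subset_span ⟨i, rfl⟩)

lemma isPrime_span_of_subset_degree_one {T : Set (MvPolynomial σ k)}
    (hT : T ⊆ (homogeneousSubmodule σ k 1 : Set (MvPolynomial σ k))) :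
    (Ideal.span T).IsPrime := by
  classical
  set W : Submodule k (MvPolynomial σ k) := Submodule.span k T with hW
  have hWT : Ideal.span (W : Set (MvPolynomial σ k)) = Ideal.span T := by
    refine le_antisymm ?_ (Ideal.span_mono Submodule.subset_span)
    rw [Ideal.span_le]
    intro w hw
    exact Submodule.span_le.mpr (fun x hx =>
      show x ∈ (Ideal.span T).restrictScalars k from Ideal.subset_span hx) hw
  obtain ⟨Co, hC⟩ := Submodule.exists_isCompl W
  set pr := Submodule.linearProjOfIsCompl W Co hC with hpr
  set ev : MvPolynomial σ k →ₐ[k] MvPolynomial σ k :=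
    aeval (fun i => X i - (pr (X i) : MvPolynomial σ k)) with hev
  have key0 : ∀ v ∈ Submodule.span k (Set.range (X : σ → MvPolynomial σ k)),
      ev v = v - (pr v : MvPolynomial σ k) := by
    intro v hv
    induction hv using Submodule.span_induction with
    | mem x hx =>
      obtain ⟨i, rfl⟩ := hx
      simp [hev, aeval_X]
    | zero => simp
    | add x y hx hy ihx ihy =>
      rw [map_add, map_add, ihx, ihy, Submodule.coe_add]; ring
    | smul c x hx ihx =>
      rw [map_smul, map_smul, ihx, Submodule.coe_smul, smul_sub]
  have hWX : W ≤ Submodule.span k (Set.range (X : σ → MvPolynomial σ k)) :=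
    le_trans (Submodule.span_le.mpr hT) homog_one_le_spanX
  have key2 : ∀ w ∈ W, ev w = 0 := by
    intro w hw
    rw [key0 w (hWX hw)]
    rw [show pr w = ⟨w, hw⟩ from Submodule.linearProjOfIsCompl_apply_left hC ⟨w, hw⟩]
    simp
  have key1 : ∀ f, ev f - f ∈ Ideal.span (W : Set (MvPolynomial σ k)) := by
    intro f
    induction f using MvPolynomial.induction_on with
    | C a => simp [hev, aeval_C, algebraMap_eq]
    | add p q hp hq =>
      have hr : ev (p + q) - (p + q) = (ev p - p) + (ev q - q) := by
        rw [map_add]; ring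
      rw [hr]; exact add_mem hp hq
    | mul_X p i hp =>
      have hr : ev (p * X i) - p * X i
          = ev p * (-(pr (X i) : MvPolynomial σ k)) + (ev p - p) * X i := by
        rw [map_mul, hev, aeval_X]; ring
      rw [hr]
      exact add_mem
        (Ideal.mul_mem_left _ _ (neg_mem (Ideal.subset_span (pr (X i)).2)))
        (Ideal.mul_mem_right _ _ hp)
  have hker : Ideal.span (W : Set (MvPolynomial σ k)) = RingHom.ker ev.toRingHom := by
    refine le_antisymm ?_ ?_
    · rw [Ideal.span_le]
      intro w hw
      simpa [RingHom.mem_ker] using key2 w hw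
    · intro f hf
      have h := key1 f
      rw [show ev f = 0 from hf, zero_sub] at h
      simpa using neg_mem h
  rw [← hWT, hker]
  exact RingHom.ker_isPrime _

end Poly

section Comax
variable {R : Type*} [CommRing R] {ι : Type*}

lemma prod_mem_sup' {T : Finset ι} {a : ι → Ideal R} {c : Ideal R} {b : ι → R}
    (hb : ∀ i ∈ T, b i ∈ a i ⊔ c) : (∏ i ∈ T, b i) ∈ (∏ i ∈ T, a i) ⊔ c := by
  classical
  induction T using Finset.induction_on with
  | empty => simp
  | @insert j T hj ih =>
    rw [Finset.prod_insert hj, Finset.prod_insert hj]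
    obtain ⟨v, hv, w, hw, hvw⟩ := Submodule.mem_sup.mp (hb j (Finset.mem_insert_self j T))
    obtain ⟨y, hy, z, hz, hyz⟩ :=
      Submodule.mem_sup.mp (ih (fun i hi => hb i (Finset.mem_insert_of_mem hi)))
    rw [← hvw, ← hyz]
    have hring : (v + w) * (y + z) = v * y + (v * z + (w * y + w * z)) := by ring
    rw [hring]
    refine Submodule.mem_sup.mpr ⟨v * y, Ideal.mul_mem_mul hv hy, v * z + (w * y + w * z),
      add_mem (Ideal.mul_mem_left _ _ hz)
        (add_mem (Ideal.mul_mem_right _ _ hw) (Ideal.mul_mem_right _ _ hw)), rfl⟩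

lemma exists_mul_mem_prod {p : Ideal R} (hp : p.IsPrime) (T : Finset ι) (a : ι → Ideal R)
    (h : ∀ i ∈ T, ∀ j ∈ T, i ≠ j → ¬(a i ⊔ a j ≤ p)) :
    ∃ s, s ∉ p ∧ ∀ x, (∀ i ∈ T, x ∈ a i) → s * x ∈ ∏ i ∈ T, a i := by
  classical
  induction T using Finset.induction_on with
  | empty =>
    exact ⟨1, (Ideal.ne_top_iff_one p).mp hp.ne_top, fun x _ => by simp⟩
  | @insert j T hj ih =>
    obtain ⟨s, hs, hsx⟩ := ih (fun i hi i' hi' hne =>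
      h i (Finset.mem_insert_of_mem hi) i' (Finset.mem_insert_of_mem hi') hne)
    have hchoice : ∀ i : ι, ∃ v : R, i ∈ T → (v ∈ a i ⊔ a j ∧ v ∉ p) := by
      intro i
      by_cases hi : i ∈ T
      · obtain ⟨v, hv1, hv2⟩ := SetLike.not_le_iff_exists.mp
          (h i (Finset.mem_insert_of_mem hi) j (Finset.mem_insert_self j T)
            (fun hij => hj (hij ▸ hi)))
        exact ⟨v, fun _ => ⟨hv1, hv2⟩⟩
      · exact ⟨1, fun h' => absurd h' hi⟩
    choose u hu using hchoice
    have hbp : (∏ i ∈ T, u i) ∉ p := by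
      intro hb
      obtain ⟨i, hi, hip⟩ := (Ideal.IsPrime.prod_mem_iff (hp := hp)).mp hb
      exact (hu i hi).2 hip
    refine ⟨s * ∏ i ∈ T, u i, fun hmem => ?_, ?_⟩
    · rcases hp.mem_or_mem hmem with h1 | h1
      · exact hs h1
      · exact hbp h1
    · intro x hx
      have hxj : x ∈ a j := hx j (Finset.mem_insert_self j T)
      have hsx' : s * x ∈ ∏ i ∈ T, a i :=
        hsx x (fun i hi => hx i (Finset.mem_insert_of_mem hi))
      obtain ⟨y, hy, z, hz, hyz⟩ :=
        Submodule.mem_sup.mp (prod_mem_sup' (c := a j) (fun i hi => (hu i hi).1))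
      rw [Finset.prod_insert hj, mul_comm (a j)]
      have hring : s * (∏ i ∈ T, u i) * x = y * (s * x) + (s * x) * z := by
        rw [← hyz]; ring
      rw [hring]
      exact add_mem (Ideal.mul_mem_mul hy (Ideal.mul_mem_left _ _ hxj))
        (Ideal.mul_mem_mul hsx' hz)

end Comax

lemma exists_lt_chain {α : Type*} [Preorder α] (h : Order.krullDim α = 1) :
    ∃ a b : α, a < b := by
  by_contra hc
  push_neg at hc
  cases isEmpty_or_nonempty α with
  | inl he =>
    rw [Order.krullDim_eq_bot] at h
    exact absurd h (by simp)
  | inr hne =>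
    rw [Order.krullDim_eq_iSup_length] at h
    have h0 : ∀ p : LTSeries α, p.length = 0 := by
      intro p
      by_contra hp
      exact hc _ _ (p.step ⟨0, Nat.pos_of_ne_zero hp⟩)
    have hsup : ⨆ (p : LTSeries α), (p.length : ℕ∞) = 0 := by
      simp [h0]
    rw [hsup] at h
    exact absurd h (by simp)

lemma aux_not_sup_le
    {Ii Ij ℓ : Ideal (PolyRing k n)} {Ti Tj : Set (PolyRing k n)}
    (hTi : Ti ⊆ (polyGrading k n 1 : Set (PolyRing k n)))
    (hTj : Tj ⊆ (polyGrading k n 1 : Set (PolyRing k n)))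
    (hIi : Ii = Ideal.span Ti) (hIj : Ij = Ideal.span Tj)
    (hdim : dimOfSet (pZeroLocus Ii ∩ pZeroLocus Ij) ≤ 1)
    (hline : dimOfSet (pZeroLocus ℓ) = 1)
    (hi : Ii ≤ ℓ) (hj : Ij ≤ ℓ)
    (x : PSpace k n) (hx : ¬ ℓ ≤ x.asHomogeneousIdeal.toIdeal) :
    ¬ (Ii ⊔ Ij ≤ x.asHomogeneousIdeal.toIdeal) := by
  intro hle
  have hq_eq : Ii ⊔ Ij = Ideal.span (Ti ∪ Tj) := by rw [Ideal.span_union, hIi, hIj]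
  have hqprime : (Ii ⊔ Ij).IsPrime := by
    rw [hq_eq]; exact isPrime_span_of_subset_degree_one (Set.union_subset hTi hTj)
  have hqhom : Ideal.IsHomogeneous (polyGrading k n) (Ii ⊔ Ij) := by
    rw [hq_eq]
    exact Ideal.homogeneous_span _ _ (fun r hr => ⟨1, (Set.union_subset hTi hTj) hr⟩)
  have hqrel : ¬ (HomogeneousIdeal.irrelevant (polyGrading k n) ≤
      (⟨Ii ⊔ Ij, hqhom⟩ : HomogeneousIdeal (polyGrading k n))) :=
    fun hirr => x.not_irrelevant_le (fun f hf => hle (hirr hf))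
  set y : PSpace k n := ⟨⟨Ii ⊔ Ij, hqhom⟩, hqprime, hqrel⟩ with hy
  set Z : Set (PSpace k n) := pZeroLocus Ii ∩ pZeroLocus Ij with hZ
  have hZq : Z = ProjectiveSpectrum.zeroLocus (polyGrading k n)
      ((Ii ⊔ Ij : Ideal (PolyRing k n)) : Set (PolyRing k n)) := by
    rw [hZ, hq_eq, hIi, hIj]
    have e1 : pZeroLocus (Ideal.span Ti) = ProjectiveSpectrum.zeroLocus (polyGrading k n) Ti :=
      ProjectiveSpectrum.zeroLocus_span _ _
    have e2 : pZeroLocus (Ideal.span Tj) = ProjectiveSpectrum.zeroLocus (polyGrading k n) Tj :=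
      ProjectiveSpectrum.zeroLocus_span _ _
    have e3 : ProjectiveSpectrum.zeroLocus (polyGrading k n)
        ((Ideal.span (Ti ∪ Tj) : Ideal (PolyRing k n)) : Set (PolyRing k n))
        = ProjectiveSpectrum.zeroLocus (polyGrading k n) (Ti ∪ Tj) :=
      ProjectiveSpectrum.zeroLocus_span _ _
    rw [e1, e2, e3, ProjectiveSpectrum.zeroLocus_union]
  have hclosure : Z = closure {y} := by
    rw [← ProjectiveSpectrum.zeroLocus_vanishingIdeal_eq_closure,
      ProjectiveSpectrum.vanishingIdeal_singleton]
    exact hZq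
  have hsub : pZeroLocus ℓ ⊆ Z := by
    rw [hZ]
    exact Set.subset_inter
      (ProjectiveSpectrum.zeroLocus_anti_mono_ideal (𝒜 := polyGrading k n) hi)
      (ProjectiveSpectrum.zeroLocus_anti_mono_ideal (𝒜 := polyGrading k n) hj)
  have hxZ : x ∈ Z := by
    rw [hZq, ProjectiveSpectrum.mem_zeroLocus]
    exact fun f hf => hle hf
  have hxℓ : x ∉ pZeroLocus ℓ := by
    rw [ProjectiveSpectrum.mem_zeroLocus]
    exact fun hsub' => hx (fun f hf => hsub' hf)
  -- the chain in `pZeroLocus ℓ`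
  obtain ⟨c0, c1, hc01⟩ :=
    exists_lt_chain (α := TopologicalSpace.IrreducibleCloseds (pZeroLocus ℓ)) hline
  -- transfer to Z
  have hFcl : ∀ c : TopologicalSpace.IrreducibleCloseds (pZeroLocus ℓ),
      IsClosed (Set.inclusion hsub '' (c : Set (pZeroLocus ℓ)) : Set Z) := by
    intro c
    obtain ⟨E, hE, hEeq⟩ := isClosed_induced_iff.mp c.isClosed'
    have himg : Set.inclusion hsub '' (c : Set (pZeroLocus ℓ))
        = (Subtype.val : Z → PSpace k n) ⁻¹' (E ∩ pZeroLocus ℓ) := by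
      ext z
      constructor
      · rintro ⟨w, hw, rfl⟩
        exact ⟨(Set.ext_iff.mp hEeq w).mpr hw, w.2⟩
      · rintro ⟨hzE, hzl⟩
        exact ⟨⟨z.1, hzl⟩, (Set.ext_iff.mp hEeq ⟨z.1, hzl⟩).mp hzE, Subtype.ext rfl⟩
    rw [himg]
    exact (hE.inter (ProjectiveSpectrum.isClosed_zeroLocus _ _)).preimage
      continuous_subtype_val
  let F : TopologicalSpace.IrreducibleCloseds (pZeroLocus ℓ) →
      TopologicalSpace.IrreducibleCloseds Z := fun c =>
    ⟨Set.inclusion hsub '' (c : Set (pZeroLocus ℓ)),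
      c.isIrreducible'.image _ (continuous_inclusion hsub).continuousOn, hFcl c⟩
  have hinj : Function.Injective (Set.inclusion hsub) := Set.inclusion_injective hsub
  have hlt : F c0 < F c1 := by
    rw [← SetLike.coe_ssubset_coe]
    have h1 : (c0 : Set (pZeroLocus ℓ)) ⊂ c1 := SetLike.coe_ssubset_coe.mpr hc01
    refine ⟨Set.image_mono h1.subset, fun hcon => ?_⟩
    obtain ⟨w, hw1, hw0⟩ := Set.exists_of_ssubset h1
    obtain ⟨v, hv, hveq⟩ := hcon ⟨w, hw1, rfl⟩
    exact hw0 (hinj hveq ▸ hv)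
  have hZirr : IsIrreducible Z := by
    rw [hclosure]
    exact isIrreducible_singleton.closure
  haveI : IrreducibleSpace Z := Subtype.irreducibleSpace hZirr
  let top : TopologicalSpace.IrreducibleCloseds Z :=
    ⟨Set.univ, IrreducibleSpace.isIrreducible_univ _, isClosed_univ⟩
  have hlt2 : F c1 < top := by
    rw [← SetLike.coe_ssubset_coe]
    refine ⟨Set.subset_univ _, fun hcon => ?_⟩
    obtain ⟨v, hv, hveq⟩ := hcon (Set.mem_univ (⟨x, hxZ⟩ : Z))
    have hvx : (v : PSpace k n) = x := congrArg Subtype.val hveq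
    exact hxℓ (hvx ▸ v.2)
  let P : LTSeries (TopologicalSpace.IrreducibleCloseds Z) :=
    ⟨2, ![F c0, F c1, top], by
      intro i
      fin_cases i
      · exact hlt
      · exact hlt2⟩
  have hP := Order.LTSeries.length_le_krullDim P
  have h2 : ((2 : ℕ) : WithBot ℕ∞) ≤ 1 := le_trans hP hdim
  exact absurd h2 (by decide)

end SupportLineAux

/-! **Statement 13** (Lemma 2.3 of the paper).  Let `X₁, …, X_d` be linear
subspaces of `ℙⁿ` with pairwise intersections of dimension at most one, with
ideal sheaves `I₁, …, I_d`; let `I = I₁ ∩ ⋯ ∩ I_d` be the ideal sheaf of the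
union and `J = I₁ ⋯ I_d`.  For a line `L` (given by its saturated linear
ideal `ℓ`) contained in the support of `I/J`, set `J_L' = ∏_{Xᵢ ⊉ L} Iᵢ` and
`I_L = ⋂_{Xᵢ ⊇ L} Iᵢ` (the ideal sheaf of `∪_{Xᵢ ⊇ L} Xᵢ`).  Then the support
of `(I_L · J_L') / J` is contained in `L`. -/
theorem support_of_line_approximation
    {k : Type} [Field k] {n : ℕ} (d : ℕ)
    (I : Fin d → Ideal (PolyRing k n))
    (hlin : ∀ i, IsLinearIdeal (I i))
    (hsat : ∀ i, IsSaturatedIdeal (I i))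
    (hpair : ∀ i j, i ≠ j → dimOfSet (pZeroLocus (I i) ∩ pZeroLocus (I j)) ≤ 1)
    (ℓ : Ideal (PolyRing k n))
    (hℓlin : IsLinearIdeal ℓ) (hℓsat : IsSaturatedIdeal ℓ)
    (hline : dimOfSet (pZeroLocus ℓ) = 1)
    (hsupp : pZeroLocus ℓ ⊆
      sheafSupport (tilde (quotIdealGM (⨅ i, I i) (∏ i, I i)) 0)) :
    sheafSupport (tilde (quotIdealGM
      ((⨅ i, ⨅ _ : I i ≤ ℓ, I i) * ∏ i ∈ Finset.univ.filter (fun i => ¬ I i ≤ ℓ), I i)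
      (∏ i, I i)) 0) ⊆ pZeroLocus ℓ := by
  classical
  intro x hxsupp
  by_contra hxl
  set A : Ideal (PolyRing k n) :=
    (⨅ i, ⨅ _ : I i ≤ ℓ, I i) * ∏ i ∈ Finset.univ.filter (fun i => ¬ I i ≤ ℓ), I i with hA
  set Jd : Ideal (PolyRing k n) := ∏ i, I i with hJ
  set M := quotIdealGM A Jd with hM
  set T : Finset (Fin d) := Finset.univ.filter (fun i => I i ≤ ℓ) with hT
  -- the localization of `M` is trivial away from `pZeroLocus ℓ`
  have hloc : ∀ y : PSpace k n, y ∉ pZeroLocus ℓ → Subsingleton (LocAt M y) := by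
    intro y hy
    have hyl : ¬ ℓ ≤ y.asHomogeneousIdeal.toIdeal := fun hcon =>
      hy ((ProjectiveSpectrum.mem_zeroLocus _ _ _).mpr hcon)
    have hpairy : ∀ i ∈ T, ∀ j ∈ T, i ≠ j →
        ¬(I i ⊔ I j ≤ y.asHomogeneousIdeal.toIdeal) := by
      intro i hi j hj hij
      obtain ⟨Ti, hTi, hIi⟩ := hlin i
      obtain ⟨Tj, hTj, hIj⟩ := hlin j
      exact SupportLineAux.aux_not_sup_le hTi hTj hIi hIj (hpair i j hij) hline
        (Finset.mem_filter.mp hi).2 (Finset.mem_filter.mp hj).2 y hyl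
    obtain ⟨s, hs, hprod⟩ :=
      SupportLineAux.exists_mul_mem_prod y.isPrime T I hpairy
    have hsA : ∀ a ∈ A, s * a ∈ Jd := by
      intro a ha
      rw [hA] at ha
      refine Submodule.mul_induction_on ha ?_ ?_
      · intro m hm q hq
        have hmT : ∀ i ∈ T, m ∈ I i := by
          intro i hi
          have h1 : (⨅ i, ⨅ _ : I i ≤ ℓ, I i) ≤ ⨅ _ : I i ≤ ℓ, I i := iInf_le _ i
          have h2 : (⨅ _ : I i ≤ ℓ, I i) ≤ I i := iInf_le _ (Finset.mem_filter.mp hi).2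
          exact (le_trans h1 h2) hm
        have h1 : s * m ∈ ∏ i ∈ T, I i := hprod m hmT
        have hr : s * (m * q) = (s * m) * q := by ring
        rw [hr, hJ, ← Finset.prod_filter_mul_prod_filter_not Finset.univ (fun i => I i ≤ ℓ) I]
        exact Ideal.mul_mem_mul h1 hq
      · intro a b ha hb
        have hr : s * (a + b) = s * a + s * b := by ring
        rw [hr]; exact add_mem ha hb
    rw [LocalizedModule.subsingleton_iff]
    intro m
    obtain ⟨⟨av, hav⟩, rfl⟩ := Submodule.Quotient.mk_surjective _ m
    refine ⟨s, hs, ?_⟩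
    refine (Submodule.Quotient.mk_eq_zero _ (x := s • (⟨av, hav⟩ : (ofIdeal A).carrier))).mpr ?_
    show s * av ∈ Jd
    exact hsA av hav
  -- now the stalk of the sheafification at x is trivial
  set U : Opens (PSpace k n) :=
    ⟨(pZeroLocus ℓ)ᶜ, (ProjectiveSpectrum.isClosed_zeroLocus _ _).isOpen_compl⟩ with hU
  have hxU : x ∈ U := hxl
  have hzero : ∀ t : ((tilde M 0).presheaf.stalk x : AddCommGrpCat.{0}), t = 0 := by
    intro t
    obtain ⟨W, hxW, sec, rfl⟩ := TopCat.Presheaf.germ_exist (tilde M 0).presheaf (x := x) t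
    set sec' := (tilde M 0).presheaf.map (homOfLE (inf_le_left : W ⊓ U ≤ W)).op sec with hsec'
    have e1 : (tilde M 0).presheaf.germ W x hxW sec
        = (tilde M 0).presheaf.germ (W ⊓ U) x ⟨hxW, hxU⟩ sec' :=
      ((tilde M 0).presheaf.germ_res_apply (homOfLE (inf_le_left : W ⊓ U ≤ W)) x
        ⟨hxW, hxU⟩ sec).symm
    have hcov := CategoryTheory.Presheaf.imageSieve_mem
      (Opens.grothendieckTopology (TopCat.of (PSpace k n)))
      (CategoryTheory.toSheafify (Opens.grothendieckTopology (TopCat.of (PSpace k n)))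
        (tildePresheaf M 0)) sec'
    obtain ⟨V, fVW, hfV, hxV⟩ := hcov x ⟨hxW, hxU⟩
    obtain ⟨tloc, htloc⟩ := hfV
    haveI hsubV : ∀ y : (V : Opens (PSpace k n)), Subsingleton (LocAt M y.1) := fun y =>
      hloc y.1 ((le_trans (leOfHom fVW) inf_le_right) y.2)
    letI hPsub : Subsingleton ((tildePresheaf M 0).obj (op V)) :=
      (inferInstance : Subsingleton (tildeSections M 0 V))
    have h0 : tloc = 0 := Subsingleton.elim _ _
    rw [h0] at htloc
    have h00 : (tilde M 0).presheaf.map fVW.op sec'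
        = (0 : ((tilde M 0).presheaf.obj (op V))) := by
      have : (CategoryTheory.toSheafify (Opens.grothendieckTopology (TopCat.of (PSpace k n)))
          (tildePresheaf M 0)).app (op V) 0 = 0 := map_zero _
      rw [this] at htloc
      exact htloc.symm
    have e2 : (tilde M 0).presheaf.germ (W ⊓ U) x ⟨hxW, hxU⟩ sec'
        = (tilde M 0).presheaf.germ V x hxV ((tilde M 0).presheaf.map fVW.op sec') :=
      ((tilde M 0).presheaf.germ_res_apply fVW x hxV sec').symm
    have e3 : (tilde M 0).presheaf.germ V x hxV ((tilde M 0).presheaf.map fVW.op sec') = 0 := by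
      rw [h00]
      exact map_zero _
    exact e1.trans (e2.trans e3)
  obtain ⟨a, b, hab⟩ := hxsupp
  exact hab ((hzero a).trans (hzero b).symm)

end
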